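/- There exists a densely defined linear operator T in the Hilbert space L²(ℝ) such that T is paranormal (‖Tx‖² ≤ ‖T²x‖·‖x‖ for all x ∈ D(T²)) and T is not closable, i.e., T has no closed linear extension. -/

import Mathlib

open MeasureTheory Set
open scoped InnerProductSpace

noncomputable section ParanormalAux

abbrev Hh := Lp ℂ 2 (volume : Measure ℝ)

lemma vol_Ico (n : ℕ) : volume (Ico (n:ℝ) (n+1)) ≠ ⊤ := by
  simp [Real.volume_Ico]

def uu (n : ℕ) : Hh := indicatorConstLp 2 measurableSet_Ico (vol_Ico n) (1:ℂ)

lemma norm_uu (n : ℕ) : ‖uu n‖ = 1 := by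
  rw [uu, norm_indicatorConstLp (by norm_num) (by norm_num)]
  simp [Real.volume_Ico]

lemma inner_uu_ne {m n : ℕ} (h : m ≠ n) : ⟪uu m, uu n⟫_ℂ = 0 := by
  rw [uu, L2.inner_indicatorConstLp_eq_setIntegral_inner]
  have hae : (fun x => ⟪(1:ℂ), (uu n : ℝ → ℂ) x⟫_ℂ) =ᵐ[volume.restrict (Ico (m:ℝ) (m+1))]
      fun x => (Ico (n:ℝ) (n+1)).indicator (fun _ => (1:ℂ)) x := by
    filter_upwards [ae_restrict_of_ae (indicatorConstLp_coeFn (p := 2)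
      (hs := measurableSet_Ico (a := (n:ℝ)) (b := (n:ℝ)+1)) (hμs := vol_Ico n) (c := (1:ℂ)))]
      with x hx
    simp [uu, hx, RCLike.inner_apply]
  rw [integral_congr_ae hae, setIntegral_indicator measurableSet_Ico]
  have : Ico (m:ℝ) (m+1) ∩ Ico (n:ℝ) (n+1) = ∅ := by
    apply Set.eq_empty_of_forall_notMem
    rintro x ⟨⟨h1, h2⟩, h3, h4⟩
    rcases h.lt_or_gt with hlt | hlt
    · have : (m:ℝ) + 1 ≤ n := by exact_mod_cast hlt
      linarith
    · have : (n:ℝ) + 1 ≤ m := by exact_mod_cast hlt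
      linarith
  simp [this]

lemma inner_uu_self (n : ℕ) : ⟪uu n, uu n⟫_ℂ = 1 := by
  rw [inner_self_eq_norm_sq_to_K, norm_uu]; norm_num

def ww (n : ℕ) : Hh := uu 0 + (((n:ℂ)+1)⁻¹) • uu (n+1)

lemma inner_uu_ww (k n : ℕ) : ⟪uu (k+1), ww n⟫_ℂ = if n = k then ((k:ℂ)+1)⁻¹ else 0 := by
  rw [ww, inner_add_right, inner_smul_right, inner_uu_ne (Nat.succ_ne_zero k)]
  rcases eq_or_ne n k with rfl | hnk
  · rw [inner_uu_self]; simp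
  · rw [inner_uu_ne (by omega), if_neg hnk]; ring

lemma li_ww : LinearIndependent ℂ ww := by
  rw [linearIndependent_iff]
  intro l hl
  ext k
  have h := congrArg (fun z => ⟪uu (k+1), z⟫_ℂ) hl
  simp only [Finsupp.linearCombination_apply, inner_zero_right] at h
  rw [Finsupp.sum, inner_sum] at h
  simp only [inner_smul_right, inner_uu_ww] at h
  rw [Finset.sum_eq_single k (fun b _ hb => by rw [if_neg hb, mul_zero])
    (fun hk => by simp [Finsupp.notMem_support_iff.mp hk])] at h
  rcases Finset.eq_empty_or_nonempty l.support with he | _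
  · simp [Finsupp.support_eq_empty.mp he]
  · simp only [if_pos rfl] at h
    have h2 : ((k:ℂ)+1)⁻¹ ≠ 0 := inv_ne_zero (Nat.cast_add_one_ne_zero k)
    have := mul_eq_zero.mp h
    simpa [h2] using this

lemma norm_ww_le (n : ℕ) : ‖ww n‖ ≤ 2 := by
  rw [ww]
  refine (norm_add_le _ _).trans ?_
  rw [norm_smul, norm_uu, norm_uu]
  have h1 : ‖(((n:ℂ)+1))⁻¹‖ ≤ 1 := by
    rw [norm_inv]
    have : (1:ℝ) ≤ ‖((n:ℂ)+1)‖ := by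
      have : ((n:ℂ)+1) = ((n+1 : ℕ) : ℂ) := by push_cast; ring
      rw [this, Complex.norm_natCast]
      exact_mod_cast Nat.one_le_iff_ne_zero.mpr (Nat.succ_ne_zero n)
    exact inv_le_one_of_one_le₀ this
  linarith

lemma norm_ww_sub (n : ℕ) : ‖ww n - uu 0‖ = ((n:ℝ)+1)⁻¹ := by
  rw [ww]
  have : uu 0 + (((n:ℂ)+1)⁻¹) • uu (n+1) - uu 0 = (((n:ℂ)+1)⁻¹) • uu (n+1) := by abel
  rw [this, norm_smul, norm_uu, norm_inv]
  have : ((n:ℂ)+1) = ((n+1 : ℕ) : ℂ) := by push_cast; ring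
  rw [this, Complex.norm_natCast]
  push_cast; ring

def sW : Set Hh := Set.range ww
lemma li_sW : LinearIndepOn ℂ id sW := (linearIndepOn_id_range_iff li_ww.injective).mpr li_ww

def BB : Module.Basis (li_sW.extend (Set.subset_univ sW)) ℂ Hh := Module.Basis.extend li_sW

open Classical in
def ψval (g : ℕ → ℂ) : Hh → ℂ := fun v =>
  if v ∈ Set.range ww then g (Function.invFun ww v) else 0

def lfun (g : ℕ → ℂ) : Hh →ₗ[ℂ] ℂ := BB.constr ℂ (fun i => ψval g ↑i)

lemma lfun_ww (g : ℕ → ℂ) (n : ℕ) : lfun g (ww n) = g n := by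
  have hmem : ww n ∈ li_sW.extend (Set.subset_univ sW) :=
    li_sW.subset_extend _ ⟨n, rfl⟩
  have : ww n = BB ⟨ww n, hmem⟩ := (Module.Basis.extend_apply_self li_sW ⟨ww n, hmem⟩).symm
  rw [lfun, this, Module.Basis.constr_basis]
  simp only [ψval]
  rw [if_pos ⟨n, rfl⟩, Function.leftInverse_invFun li_ww.injective n]

def ψf : Hh →ₗ[ℂ] ℂ := lfun (fun n => (n : ℂ))
def φf : Hh →ₗ[ℂ] ℂ := lfun (fun n => (n : ℂ)^2)
lemma ψf_ww (n : ℕ) : ψf (ww n) = n := lfun_ww _ n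
lemma φf_ww (n : ℕ) : φf (ww n) = (n:ℂ)^2 := lfun_ww _ n

lemma tendsto_inv_nat : Filter.Tendsto (fun n : ℕ => ((n:ℝ)+1)⁻¹) Filter.atTop (nhds 0) :=
  tendsto_one_div_add_atTop_nhds_zero_nat.congr (by intro n; rw [one_div])

lemma ψf_not_continuous : ¬ Continuous ψf := by
  intro hc
  set g : ℕ → Hh := fun n => ((n:ℂ)+1)⁻¹ • ww (n+1) with hg
  have hz : Filter.Tendsto g Filter.atTop (nhds 0) := by
    refine squeeze_zero_norm (a := fun n : ℕ => 2 * ((n:ℝ)+1)⁻¹) (fun n => ?_) ?_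
    · rw [hg]
      simp only []
      rw [norm_smul, norm_inv]
      have h1 : ‖(n:ℂ)+1‖ = (n:ℝ)+1 := by
        have : ((n:ℂ)+1) = ((n+1 : ℕ) : ℂ) := by push_cast; ring
        rw [this, Complex.norm_natCast]; push_cast; ring
      rw [h1]
      calc ((n:ℝ)+1)⁻¹ * ‖ww (n+1)‖ ≤ ((n:ℝ)+1)⁻¹ * 2 := by
            apply mul_le_mul le_rfl (norm_ww_le _) (norm_nonneg _) (by positivity)
        _ = 2 * ((n:ℝ)+1)⁻¹ := by ring
    · simpa using tendsto_inv_nat.const_mul (2:ℝ)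
  have h1 : Filter.Tendsto (⇑ψf ∘ g) Filter.atTop (nhds 0) := by
    have := (hc.tendsto 0).comp hz
    rwa [map_zero ψf] at this
  have h2 : ∀ n : ℕ, (⇑ψf ∘ g) n = 1 := by
    intro n
    have hne : ((n:ℂ)+1) ≠ 0 := Nat.cast_add_one_ne_zero n
    simp only [Function.comp_apply, hg, LinearMap.map_smul, ψf_ww, smul_eq_mul]
    push_cast
    field_simp
  rw [Filter.tendsto_congr h2] at h1
  have := tendsto_nhds_unique h1 tendsto_const_nhds
  exact one_ne_zero this.symm

lemma dense_ker_ψf : Dense (LinearMap.ker ψf : Set Hh) := by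
  rcases ψf.isClosed_or_dense_ker with hcl | hd
  · exact absurd (ψf.continuous_of_isClosed_ker hcl) ψf_not_continuous
  · exact hd

def yy (n : ℕ) : Hh := (2:ℂ)⁻¹ • ww n - ww (n+1) + (2:ℂ)⁻¹ • ww (n+2)

lemma ψf_yy (n : ℕ) : ψf (yy n) = 0 := by
  simp only [yy, map_add, map_sub, LinearMap.map_smul, ψf_ww, smul_eq_mul]
  push_cast
  ring

lemma φf_yy (n : ℕ) : φf (yy n) = 1 := by
  simp only [yy, map_add, map_sub, LinearMap.map_smul, φf_ww, smul_eq_mul]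
  push_cast
  ring

lemma yy_tendsto : Filter.Tendsto yy Filter.atTop (nhds 0) := by
  refine squeeze_zero_norm (a := fun n : ℕ => 3 * ((n:ℝ)+1)⁻¹) (fun n => ?_) ?_
  · have hrw : yy n = (2:ℂ)⁻¹ • (ww n - uu 0) - (ww (n+1) - uu 0) + (2:ℂ)⁻¹ • (ww (n+2) - uu 0) := by
      rw [yy]; module
    rw [hrw]
    have hb : ∀ k : ℕ, n ≤ k → ‖ww k - uu 0‖ ≤ ((n:ℝ)+1)⁻¹ := by
      intro k hk
      rw [norm_ww_sub]
      apply inv_anti₀ (by positivity)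
      have : (n:ℝ) ≤ k := by exact_mod_cast hk
      linarith
    have hhalf : ‖(2:ℂ)⁻¹‖ ≤ 1 := by
      rw [norm_inv]
      simp [Complex.norm_ofNat]
      norm_num
    calc ‖(2:ℂ)⁻¹ • (ww n - uu 0) - (ww (n+1) - uu 0) + (2:ℂ)⁻¹ • (ww (n+2) - uu 0)‖
        ≤ ‖(2:ℂ)⁻¹ • (ww n - uu 0) - (ww (n+1) - uu 0)‖ + ‖(2:ℂ)⁻¹ • (ww (n+2) - uu 0)‖ :=
          norm_add_le _ _
      _ ≤ (‖(2:ℂ)⁻¹ • (ww n - uu 0)‖ + ‖ww (n+1) - uu 0‖) + ‖(2:ℂ)⁻¹ • (ww (n+2) - uu 0)‖ := by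
          gcongr
          exact norm_sub_le _ _
      _ ≤ (((n:ℝ)+1)⁻¹ + ((n:ℝ)+1)⁻¹) + ((n:ℝ)+1)⁻¹ := by
          gcongr
          · rw [norm_smul]
            calc ‖(2:ℂ)⁻¹‖ * ‖ww n - uu 0‖ ≤ 1 * ((n:ℝ)+1)⁻¹ :=
                  mul_le_mul hhalf (hb n le_rfl) (norm_nonneg _) zero_le_one
              _ = ((n:ℝ)+1)⁻¹ := one_mul _
          · exact hb (n+1) (by omega)
          · rw [norm_smul]
            calc ‖(2:ℂ)⁻¹‖ * ‖ww (n+2) - uu 0‖ ≤ 1 * ((n:ℝ)+1)⁻¹ :=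
                  mul_le_mul hhalf (hb (n+2) (by omega)) (norm_nonneg _) zero_le_one
              _ = ((n:ℝ)+1)⁻¹ := one_mul _
      _ = 3 * ((n:ℝ)+1)⁻¹ := by ring
  · simpa using tendsto_inv_nat.const_mul (3:ℝ)

def Tmap : Hh →ₗ.[ℂ] Hh :=
  { domain := LinearMap.ker ψf
    toFun := LinearMap.smulRight (φf.comp (LinearMap.ker ψf).subtype) (ww 1) }

lemma Tmap_apply (x : Tmap.domain) : Tmap x = φf (x : Hh) • ww 1 := rfl

lemma ψf_ww_one : ψf (ww 1) = 1 := by rw [ψf_ww]; norm_num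


/-- There exists a densely defined linear operator `T` in `L²(ℝ)` which is paranormal
(`‖Tx‖² ≤ ‖T²x‖ ⬝ ‖x‖` for every `x ∈ D(T²) = {x ∈ D(T) : Tx ∈ D(T)}`) but not
closable, i.e. `T` has no closed linear extension. -/
theorem exists_paranormal_not_closable :
    ∃ T : Lp ℂ 2 (volume : Measure ℝ) →ₗ.[ℂ] Lp ℂ 2 (volume : Measure ℝ),
      Dense (T.domain : Set (Lp ℂ 2 (volume : Measure ℝ))) ∧
      (∀ (x : T.domain) (hx : (T x : Lp ℂ 2 (volume : Measure ℝ)) ∈ T.domain),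
        ‖(T x : Lp ℂ 2 (volume : Measure ℝ))‖ ^ 2 ≤
          ‖(T ⟨T x, hx⟩ : Lp ℂ 2 (volume : Measure ℝ))‖ * ‖(x : Lp ℂ 2 (volume : Measure ℝ))‖) ∧
      ¬ ∃ S : Lp ℂ 2 (volume : Measure ℝ) →ₗ.[ℂ] Lp ℂ 2 (volume : Measure ℝ),
          S.IsClosed ∧ T ≤ S := by
  refine ⟨Tmap, dense_ker_ψf, ?_, ?_⟩
  · intro x hx
    have hx0 : φf (x : Hh) = 0 := by
      have h1 : ψf ((Tmap x : Hh)) = 0 := hx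
      rw [Tmap_apply, LinearMap.map_smul, ψf_ww_one, smul_eq_mul, mul_one] at h1
      exact h1
    have hT0 : (Tmap x : Hh) = 0 := by
      rw [Tmap_apply, hx0, zero_smul]
    have hn : ‖(Tmap x : Hh)‖ = 0 := by rw [hT0, norm_zero]
    rw [hn]
    have h0 : (0:ℝ)^2 = 0 := by norm_num
    rw [h0]
    positivity
  · rintro ⟨S, hSc, hTS⟩
    have hy : ∀ n, yy n ∈ LinearMap.ker ψf := fun n => LinearMap.mem_ker.mpr (ψf_yy n)
    have hgraph : ∀ n : ℕ, ((yy n, ww 1) : Hh × Hh) ∈ S.graph := by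
      intro n
      apply LinearPMap.le_graph_of_le hTS
      have hmem := Tmap.mem_graph ⟨yy n, hy n⟩
      have : Tmap ⟨yy n, hy n⟩ = ww 1 := by
        rw [Tmap_apply]
        simp only []
        rw [φf_yy, one_smul]
      rwa [this] at hmem
    have htend : Filter.Tendsto (fun n : ℕ => ((yy n, ww 1) : Hh × Hh)) Filter.atTop
        (nhds (0, ww 1)) := yy_tendsto.prodMk_nhds tendsto_const_nhds
    have hmem0 : ((0, ww 1) : Hh × Hh) ∈ S.graph :=
      hSc.mem_of_tendsto htend (Filter.Eventually.of_forall hgraph)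
    have hzero : ww 1 = 0 := S.graph_fst_eq_zero_snd hmem0 rfl
    have : (1 : ℂ) = 0 := by
      rw [← ψf_ww_one, hzero, map_zero]
    exact one_ne_zero this

end ParanormalAux
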